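/- arXiv:0706.0401 — 2 statements merged into one kernel-verified Lean document; each statement's English description precedes it below -/
import Mathlib

section
/- (Kelvin invariance of the two-dimensional Toda lattice.) Let a > 0 and let u : ℤ → ℝ → ℝ → ℂ, smooth in (r,θ) for r > 0, satisfy the polar two-dimensional Toda lattice equation for all n ∈ ℤ and all r > 0. Define v(n,r,θ) = u(n, a²/r, θ) + 4n·ln(r/a). Then v is smooth in (r,θ) for r > 0 and satisfies the polar two-dimensional Toda lattice equation v_rr(n) + (1/r)v_r(n) + (1/r²)v_θθ(n) = ω_v(n−1) − ω_v(n) for all n ∈ ℤ and r > 0, where ω_v(n,r,θ) = exp(v(n,r,θ) − v(n+1,r,θ)). -/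
/-- The radial partial derivative `u_r(n, r, θ)`. -/
noncomputable def uR (u : ℤ → ℝ → ℝ → ℂ) (n : ℤ) (r θ : ℝ) : ℂ :=
  deriv (fun s : ℝ => u n s θ) r

/-- The second radial partial derivative `u_rr(n, r, θ)`. -/
noncomputable def uRR (u : ℤ → ℝ → ℝ → ℂ) (n : ℤ) (r θ : ℝ) : ℂ :=
  deriv (fun s : ℝ => uR u n s θ) r

/-- The angular partial derivative `u_θ(n, r, θ)`. -/
noncomputable def uT (u : ℤ → ℝ → ℝ → ℂ) (n : ℤ) (r θ : ℝ) : ℂ :=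
  deriv (fun t : ℝ => u n r t) θ

/-- The second angular partial derivative `u_θθ(n, r, θ)`. -/
noncomputable def uTT (u : ℤ → ℝ → ℝ → ℂ) (n : ℤ) (r θ : ℝ) : ℂ :=
  deriv (fun t : ℝ => uT u n r t) θ

/-- `u(n,·,·)` is smooth in `(r,θ)` on `{r > 0}` for every `n`. -/
def SmoothOnHalf (u : ℤ → ℝ → ℝ → ℂ) : Prop :=
  ∀ n : ℤ, ContDiffOn ℝ (⊤ : ℕ∞) (fun p : ℝ × ℝ => u n p.1 p.2) {p : ℝ × ℝ | 0 < p.1}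

/-- The polar two-dimensional Toda lattice equation
`u_rr(n) + (1/r) u_r(n) + (1/r²) u_θθ(n) = ω(n−1) − ω(n)` for `r > 0`,
where `ω(n) = exp(u(n) − u(n+1))`. -/
def PolarToda (u : ℤ → ℝ → ℝ → ℂ) : Prop :=
  ∀ (n : ℤ) (r θ : ℝ), 0 < r →
    uRR u n r θ + (1 / (r : ℂ)) * uR u n r θ + (1 / (r : ℂ) ^ 2) * uTT u n r θ
      = Complex.exp (u (n - 1) r θ - u n r θ) - Complex.exp (u n r θ - u (n + 1) r θ)

lemma slice_contDiffOn {F : ℝ × ℝ → ℂ}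
    (hF : ContDiffOn ℝ (⊤ : ℕ∞) F {p : ℝ × ℝ | 0 < p.1}) (θ : ℝ) :
    ContDiffOn ℝ (⊤ : ℕ∞) (fun s : ℝ => F (s, θ)) (Set.Ioi 0) := by
  exact hF.comp ((contDiff_id.prodMk contDiff_const).contDiffOn) (fun s hs => hs)

lemma slice_deriv_contDiffOn {F : ℝ × ℝ → ℂ}
    (hF : ContDiffOn ℝ (⊤ : ℕ∞) F {p : ℝ × ℝ | 0 < p.1}) (θ : ℝ) :
    ContDiffOn ℝ (⊤ : ℕ∞) (deriv (fun s : ℝ => F (s, θ))) (Set.Ioi 0) := by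
  exact (slice_contDiffOn hF θ).deriv_of_isOpen isOpen_Ioi (by exact_mod_cast le_top)

lemma key_alg (A R N P Q T : ℂ) (hA : A ≠ 0) (hR : R ≠ 0) :
    (2 * A ^ 2 / R ^ 3) * P + (-(A ^ 2) / R ^ 2) * ((-(A ^ 2) / R ^ 2) * Q)
        + 4 * N * (-(1 / R ^ 2))
      + 1 / R * ((-(A ^ 2) / R ^ 2) * P + 4 * N * (1 / R)) + 1 / R ^ 2 * T
    = (A ^ 4 / R ^ 4) *
        (Q + 1 / (A ^ 2 / R) * P + 1 / (A ^ 2 / R) ^ 2 * T) := by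
  rw [one_div_div, div_pow, one_div_div]
  have eA : A * A⁻¹ = 1 := mul_inv_cancel₀ hA
  have eR : R * R⁻¹ = 1 := mul_inv_cancel₀ hR
  linear_combination
    (-(A ^ 2 * R⁻¹ ^ 3 * P * (R * R⁻¹) * (A * A⁻¹ + 1))
      - R⁻¹ ^ 2 * T * (R * R⁻¹) ^ 2 * ((A * A⁻¹) ^ 2 + 1) * (A * A⁻¹ + 1)) * eA
    + (-(A ^ 2 * R⁻¹ ^ 3 * P) - R⁻¹ ^ 2 * T * (R * R⁻¹ + 1)) * eR

/-- Kelvin invariance of the two-dimensional Toda lattice: if `u` is smooth for `r > 0`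
and satisfies the polar Toda lattice equation, then
`v(n,r,θ) = u(n, a²/r, θ) + 4n ln(r/a)` is smooth for `r > 0` and satisfies it too. -/
theorem toda_kelvin_invariance (a : ℝ) (ha : 0 < a) (u : ℤ → ℝ → ℝ → ℂ)
    (hu : SmoothOnHalf u) (hToda : PolarToda u) (v : ℤ → ℝ → ℝ → ℂ)
    (hv : ∀ (n : ℤ) (r θ : ℝ),
      v n r θ = u n (a ^ 2 / r) θ + 4 * n * (Real.log (r / a) : ℂ)) :
    SmoothOnHalf v ∧ PolarToda v := by
  constructor
  · -- Smoothness
    intro n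
    have hfun : (fun p : ℝ × ℝ => v n p.1 p.2)
        = fun p : ℝ × ℝ => u n (a ^ 2 / p.1) p.2 + 4 * n * (Real.log (p.1 / a) : ℂ) :=
      funext fun p => hv n p.1 p.2
    rw [hfun]
    apply ContDiffOn.add
    · exact (hu n).comp
        ((contDiffOn_const.div contDiffOn_fst (fun p hp => ne_of_gt hp)).prodMk contDiffOn_snd)
        (fun p hp => div_pos (pow_pos ha 2) hp)
    · intro p hp
      have h1 : ContDiffAt ℝ (⊤ : ℕ∞) (fun p : ℝ × ℝ => Real.log (p.1 / a)) p :=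
        (Real.contDiffAt_log.mpr (ne_of_gt (div_pos hp ha))).comp p
          ((contDiff_fst.div_const a).contDiffAt)
      exact (contDiffAt_const.mul
        ((Complex.ofRealCLM.contDiff.contDiffAt).comp p h1)).contDiffWithinAt
  · -- The Toda equation
    intro n r θ hr
    have hr' : (r : ℂ) ≠ 0 := Complex.ofReal_ne_zero.mpr hr.ne'
    have ha' : (a : ℂ) ≠ 0 := Complex.ofReal_ne_zero.mpr ha.ne'
    have hs₀ : 0 < a ^ 2 / r := div_pos (pow_pos ha 2) hr
    -- the slice of u at angle θ
    set g : ℝ → ℂ := fun s => u n s θ with hg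
    have hgsm : ContDiffOn ℝ (⊤ : ℕ∞) g (Set.Ioi 0) := slice_contDiffOn (hu n) θ
    have hg'sm : ContDiffOn ℝ (⊤ : ℕ∞) (deriv g) (Set.Ioi 0) := slice_deriv_contDiffOn (hu n) θ
    have hgd : ∀ x : ℝ, 0 < x → HasDerivAt g (uR u n x θ) x := fun x hx =>
      ((hgsm.contDiffAt (isOpen_Ioi.mem_nhds hx)).differentiableAt (by simp)).hasDerivAt
    have hg'd : ∀ x : ℝ, 0 < x → HasDerivAt (deriv g) (uRR u n x θ) x := fun x hx =>
      ((hg'sm.contDiffAt (isOpen_Ioi.mem_nhds hx)).differentiableAt (by simp)).hasDerivAt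
    -- first radial derivative of v
    set W : ℝ → ℂ := fun s =>
      (-(a ^ 2) / s ^ 2 : ℝ) • uR u n (a ^ 2 / s) θ
        + 4 * (n : ℂ) * ((1 / s : ℝ) : ℂ) with hW
    have hVr : ∀ s : ℝ, 0 < s → HasDerivAt (fun s' : ℝ => v n s' θ) (W s) s := by
      intro s hs
      have hss : 0 < a ^ 2 / s := div_pos (pow_pos ha 2) hs
      have hinner : HasDerivAt (fun s' : ℝ => a ^ 2 / s') (-(a ^ 2) / s ^ 2) s := by
        have h := ((hasDerivAt_id s).inv hs.ne').const_mul (a ^ 2)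
        simp only [id_eq] at h
        exact h.congr_deriv (by ring)
      have houter : HasDerivAt g (uR u n (a ^ 2 / s) θ) (a ^ 2 / s) := hgd _ hss
      have hterm1 := HasDerivAt.scomp s houter hinner
      have hlog : HasDerivAt (fun s' : ℝ => Real.log (s' / a)) (1 / s) s := by
        have hdiv : HasDerivAt (fun s' : ℝ => s' / a) (1 / a) s := by
          simpa using (hasDerivAt_id s).div_const a
        have h := (Real.hasDerivAt_log (ne_of_gt (div_pos hs ha))).comp s hdiv
        exact h.congr_deriv (by field_simp)
      have hterm2 := (hlog.ofReal_comp).const_mul (4 * (n : ℂ))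
      have heq : (fun s' : ℝ => v n s' θ)
          = fun s' : ℝ => g (a ^ 2 / s') + 4 * (n : ℂ) * (Real.log (s' / a) : ℂ) :=
        funext fun s' => hv n s' θ
      rw [heq]
      exact hterm1.add hterm2
    have uRVeq : ∀ s : ℝ, 0 < s → uR v n s θ = W s := fun s hs => (hVr s hs).deriv
    -- second radial derivative of v
    set D : ℂ := ((2 * a ^ 2 / r ^ 3 : ℝ) : ℂ) * uR u n (a ^ 2 / r) θ
        + ((-(a ^ 2) / r ^ 2 : ℝ) : ℂ) * ((-(a ^ 2) / r ^ 2 : ℝ) • uRR u n (a ^ 2 / r) θ)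
        + 4 * (n : ℂ) * ((-(1 / r ^ 2) : ℝ) : ℂ) with hD
    have hWd : HasDerivAt W D r := by
      have hc1 : HasDerivAt (fun s : ℝ => (-(a ^ 2) / s ^ 2 : ℝ)) (2 * a ^ 2 / r ^ 3) r := by
        have h := ((hasDerivAt_pow 2 r).inv (pow_ne_zero 2 hr.ne')).const_mul (-(a ^ 2))
        exact h.congr_deriv (by push_cast; field_simp)
      have hGd : HasDerivAt (fun s : ℝ => uR u n (a ^ 2 / s) θ)
          ((-(a ^ 2) / r ^ 2 : ℝ) • uRR u n (a ^ 2 / r) θ) r := by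
        have hinner : HasDerivAt (fun s' : ℝ => a ^ 2 / s') (-(a ^ 2) / r ^ 2) r := by
          have h := ((hasDerivAt_id r).inv hr.ne').const_mul (a ^ 2)
          simp only [id_eq] at h
          exact h.congr_deriv (by ring)
        have houter : HasDerivAt (deriv g) (uRR u n (a ^ 2 / r) θ) (a ^ 2 / r) := hg'd _ hs₀
        have h := HasDerivAt.scomp r houter hinner
        exact h
      have hprod := (hc1.ofReal_comp).mul hGd
      have hc3 : HasDerivAt (fun s : ℝ => ((1 / s : ℝ) : ℂ))
          ((-(1 / r ^ 2) : ℝ) : ℂ) r := by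
        have h : HasDerivAt (fun s : ℝ => 1 / s) (-(1 / r ^ 2)) r := by
          simpa [one_div] using hasDerivAt_inv hr.ne'
        exact h.ofReal_comp
      exact hprod.add (hc3.const_mul (4 * (n : ℂ)))
    have huRRv : uRR v n r θ = D := by
      have hev : (fun s : ℝ => uR v n s θ) =ᶠ[nhds r] W := by
        filter_upwards [isOpen_Ioi.mem_nhds (show r ∈ Set.Ioi (0:ℝ) from hr)] with s hs
        exact uRVeq s hs
      show deriv (fun s : ℝ => uR v n s θ) r = D
      rw [hev.deriv_eq, hWd.deriv]
    have huRv : uR v n r θ = W r := uRVeq r hr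
    -- angular derivatives of v
    have huTv : ∀ t : ℝ, uT v n r t = uT u n (a ^ 2 / r) t := by
      intro t
      have heq : (fun t' : ℝ => v n r t')
          = fun t' : ℝ => u n (a ^ 2 / r) t' + 4 * (n : ℂ) * (Real.log (r / a) : ℂ) :=
        funext fun t' => hv n r t'
      show deriv (fun t' : ℝ => v n r t') t = uT u n (a ^ 2 / r) t
      rw [heq]
      exact deriv_add_const _
    have huTTv : uTT v n r θ = uTT u n (a ^ 2 / r) θ := by
      show deriv (fun t : ℝ => uT v n r t) θ = deriv (fun t : ℝ => uT u n (a ^ 2 / r) t) θ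
      congr 1
      exact funext huTv
    -- exponential factor
    set L : ℂ := (Real.log (r / a) : ℂ) with hL
    have hexp : Complex.exp (-(4 : ℂ) * L) = ((a ^ 4 / r ^ 4 : ℝ) : ℂ) := by
      rw [hL, show (-(4 : ℂ)) * (Real.log (r / a) : ℂ) = ((-4 * Real.log (r / a) : ℝ) : ℂ) by
        push_cast; ring, ← Complex.ofReal_exp]
      congr 1
      rw [show (-4 : ℝ) * Real.log (r / a) = -Real.log ((r / a) ^ (4 : ℕ)) by
        rw [Real.log_pow]; push_cast; ring, Real.exp_neg,
        Real.exp_log (by positivity)]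
      field_simp
    have hvdiff : ∀ m : ℤ, v m r θ - v (m + 1) r θ
        = (u m (a ^ 2 / r) θ - u (m + 1) (a ^ 2 / r) θ) + (-(4 : ℂ) * L) := by
      intro m
      rw [hv, hv, hL]
      push_cast
      ring
    have hE1 : Complex.exp (v (n - 1) r θ - v n r θ)
        = Complex.exp (u (n - 1) (a ^ 2 / r) θ - u n (a ^ 2 / r) θ) * ((a ^ 4 / r ^ 4 : ℝ) : ℂ) := by
      have h := hvdiff (n - 1)
      rw [show n - 1 + 1 = n by ring] at h
      rw [h, Complex.exp_add, hexp]
    have hE2 : Complex.exp (v n r θ - v (n + 1) r θ)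
        = Complex.exp (u n (a ^ 2 / r) θ - u (n + 1) (a ^ 2 / r) θ) * ((a ^ 4 / r ^ 4 : ℝ) : ℂ) := by
      rw [hvdiff n, Complex.exp_add, hexp]
    -- Toda equation for u at a²/r
    have hT := hToda n (a ^ 2 / r) θ hs₀
    rw [huRRv, huRv, huTTv, hE1, hE2]
    have key : D + 1 / (r : ℂ) * W r + 1 / (r : ℂ) ^ 2 * uTT u n (a ^ 2 / r) θ
        = ((a ^ 4 / r ^ 4 : ℝ) : ℂ) *
          (uRR u n (a ^ 2 / r) θ + 1 / ((a ^ 2 / r : ℝ) : ℂ) * uR u n (a ^ 2 / r) θ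
            + 1 / ((a ^ 2 / r : ℝ) : ℂ) ^ 2 * uTT u n (a ^ 2 / r) θ) := by
      simp only [hD, hW, Complex.real_smul]
      push_cast
      linear_combination key_alg (a : ℂ) (r : ℂ) (n : ℂ) (uR u n (a ^ 2 / r) θ)
        (uRR u n (a ^ 2 / r) θ) (uTT u n (a ^ 2 / r) θ) ha' hr'
    rw [key, hT]
    ring
end

section
/- (Reduction of the Toda lattice to the Tzitzeica equation.) Let u : ℤ → ℝ → ℝ → ℂ, smooth in (r,θ) for r > 0, satisfy the polar two-dimensional Toda lattice equation for all n ∈ ℤ and r > 0, and assume the closure constraints u(n+3,r,θ) = u(n,r,θ) and u(n,r,θ) = −u(2−n,r,θ) for all n, r > 0, θ. Then u(1,r,θ) = 0 for all r > 0 and θ, and q(r,θ) := u(0,r,θ) satisfies the polar Tzitzeica-type equation q_rr + (1/r)q_r + (1/r²)q_θθ = e^{−2q} − e^{q} for all r > 0. -/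
/-- Reduction of the Toda lattice to the Tzitzeica equation: if `u` is a smooth solution
of the polar Toda lattice with `u(n+3) = u(n)` and `u(n) = −u(2−n)`, then `u(1) = 0` and
`q = u(0)` satisfies `q_rr + (1/r) q_r + (1/r²) q_θθ = e^{−2q} − e^{q}`. -/
theorem toda_tzitzeica_reduction (u : ℤ → ℝ → ℝ → ℂ)
    (hu : SmoothOnHalf u) (hToda : PolarToda u)
    (hper : ∀ (n : ℤ) (r θ : ℝ), 0 < r → u (n + 3) r θ = u n r θ)
    (hrefl : ∀ (n : ℤ) (r θ : ℝ), 0 < r → u n r θ = -u (2 - n) r θ)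
    (q : ℝ → ℝ → ℂ) (hq : ∀ r θ : ℝ, q r θ = u 0 r θ) :
    (∀ r θ : ℝ, 0 < r → u 1 r θ = 0) ∧
    (∀ r θ : ℝ, 0 < r →
      deriv (fun s : ℝ => deriv (fun s' : ℝ => q s' θ) s) r
        + (1 / (r : ℂ)) * deriv (fun s : ℝ => q s θ) r
        + (1 / (r : ℂ) ^ 2) * deriv (fun t : ℝ => deriv (fun t' : ℝ => q r t') t) θ
        = Complex.exp (-(2 * q r θ)) - Complex.exp (q r θ)) := by
  have hq' : q = u 0 := by funext r θ; exact hq r θ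
  have h1 : ∀ r θ : ℝ, 0 < r → u 1 r θ = 0 := by
    intro r θ hr
    have := hrefl 1 r θ hr
    norm_num at this
    linear_combination (this : u 1 r θ = -u 1 r θ) / 2
  refine ⟨h1, fun r θ hr => ?_⟩
  have hm1 : u (-1) r θ = -u 0 r θ := by
    have h2 : u 2 r θ = u (-1) r θ := by
      have := hper (-1) r θ hr; norm_num at this; exact this
    have h3 : u 2 r θ = -u 0 r θ := by
      have := hrefl 2 r θ hr; norm_num at this; exact this
    rw [← h2, h3]
  have hT := hToda 0 r θ hr
  simp only [uRR, uR, uTT, uT] at hT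
  rw [hq']
  norm_num at hT ⊢
  rw [hT, hm1, h1 r θ hr]
  ring_nf
end
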